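/- Let K be a field of characteristic zero, P ∈ K[x,y] a nonzero polynomial in one variable x and one variable y with deg_x P ≤ d_x and deg_y P ≤ d_y, and suppose y_0 ∈ K[[x]] is a root of P with ∂P/∂y(x, y_0) ≠ 0. Then ord_x(∂P/∂y(x, y_0)) ≤ 2·d_x·d_y. Moreover, if P has only simple roots (nonzero discriminant), then ord_x(∂P/∂y(x, y_0)) ≤ d_x·(2·d_y − 1). -/

import Mathlib

open Polynomial

section Swap
variable {K : Type*} [CommRing K]

/-- Swap the two variables of `K[x][y]`. -/
noncomputable def pswap : Polynomial (Polynomial K) →+* Polynomial (Polynomial K) :=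
  eval₂RingHom (eval₂RingHom (C.comp C) X) (C X)

lemma pswap_coeff (p : K[X][X]) (i j : ℕ) :
    ((pswap p).coeff i).coeff j = (p.coeff j).coeff i := by
  induction p using Polynomial.induction_on' with
  | add f g hf hg => simp [map_add, hf, hg]
  | monomial n a =>
    induction a using Polynomial.induction_on' with
    | add f g hf hg =>
      rw [show ((monomial n) (f + g) : K[X][X]) = monomial n f + monomial n g from by
        rw [map_add]]
      simp only [map_add, coeff_add, hf, hg]
    | monomial m c =>
      simp only [pswap, ← C_mul_X_pow_eq_monomial, coe_eval₂RingHom, eval₂_mul, eval₂_C,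
        eval₂_pow, eval₂_X, eval₂_X_pow]
      rw [show ((C.comp C) c : K[X][X]) * X ^ m * C X ^ n = C (C c * X ^ n) * X ^ m from by
        rw [RingHom.comp_apply, map_mul, ← C_pow]; ring]
      rw [coeff_mul_X_pow', coeff_mul_X_pow']
      simp only [coeff_C, apply_ite (fun q : K[X] => q.coeff j),
        apply_ite (fun q : K[X] => q.coeff i), coeff_zero, coeff_C_mul, coeff_X_pow,
        mul_ite, mul_one, mul_zero]
      split_ifs <;> first | rfl | omega

lemma pswap_eq_zero_iff {p : K[X][X]} : pswap p = 0 ↔ p = 0 := by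
  constructor
  · intro h
    ext j i
    have := pswap_coeff p i j
    rw [h] at this
    simpa using this.symm
  · rintro rfl; exact map_zero _

lemma pswap_natDegree_le {p : K[X][X]} {d : ℕ} (h : ∀ j, (p.coeff j).natDegree ≤ d) :
    (pswap p).natDegree ≤ d := by
  rw [natDegree_le_iff_coeff_eq_zero]
  intro i hi
  ext j
  rw [pswap_coeff, coeff_eq_zero_of_natDegree_lt (lt_of_le_of_lt (h j) hi), coeff_zero]

lemma coeff_natDegree_le_of_pswap {p : K[X][X]} {d : ℕ} (h : (pswap p).natDegree ≤ d)
    (j : ℕ) : (p.coeff j).natDegree ≤ d := by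
  rw [natDegree_le_iff_coeff_eq_zero]
  intro i hi
  rw [← pswap_coeff, coeff_eq_zero_of_natDegree_lt (lt_of_le_of_lt h hi), coeff_zero]

/-- coefficients of a factor of `p` have `x`-degree bounded by that of `p`. -/
lemma coeff_natDegree_le_of_dvd [IsDomain K] {p q : K[X][X]} (hdvd : q ∣ p) (hp : p ≠ 0)
    {d : ℕ} (h : ∀ j, (p.coeff j).natDegree ≤ d) (j : ℕ) : (q.coeff j).natDegree ≤ d := by
  obtain ⟨t, rfl⟩ := hdvd
  have hq : q ≠ 0 := fun h0 => hp (by simp [h0])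
  have ht : t ≠ 0 := fun h0 => hp (by simp [h0])
  have hq' : pswap q ≠ 0 := fun h0 => hq (pswap_eq_zero_iff.mp h0)
  have ht' : pswap t ≠ 0 := fun h0 => ht (pswap_eq_zero_iff.mp h0)
  refine coeff_natDegree_le_of_pswap (le_trans ?_ (pswap_natDegree_le h)) j
  rw [map_mul, natDegree_mul hq' ht']
  exact Nat.le_add_right _ _

end Swap

section Sylvester

variable {K : Type*} [Field K]

/-- Write a polynomial of `natDegree < N` as the "reversed" sum of its monomials. -/
lemma rowsum {S : Type*} [CommRing S] {p : S[X]} {N : ℕ} (h : p.natDegree < N) :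
    ∑ j : Fin N, C (p.coeff (N - 1 - (j : ℕ))) * X ^ (N - 1 - (j : ℕ)) = p := by
  rw [Fin.sum_univ_eq_sum_range (fun j => C (p.coeff (N - 1 - j)) * X ^ (N - 1 - j)) N,
    Finset.sum_range_reflect (fun j => C (p.coeff j) * X ^ j) N]
  simp only [C_mul_X_pow_eq_monomial]
  exact (as_sum_range' p N h).symm

/-- Sylvester-matrix / resultant argument: for `q r ∈ K[x][y]` with coefficients of
`x`-degree at most `dx` and coprime images over `K(x)`, there is a nonzero `D ∈ K[x]`
of degree at most `dx * (deg q + deg r)` lying in the ideal generated by `q` and `r`. -/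
lemma sylvester_exists (q r : K[X][X]) (hq : q ≠ 0) (hr : r ≠ 0) (hn : 0 < q.natDegree)
    (dx : ℕ) (hqx : ∀ j, (q.coeff j).natDegree ≤ dx) (hrx : ∀ j, (r.coeff j).natDegree ≤ dx)
    (hcop : IsCoprime (q.map (algebraMap K[X] (RatFunc K)))
      (r.map (algebraMap K[X] (RatFunc K)))) :
    ∃ (D : K[X]) (A B : K[X][X]), D ≠ 0 ∧ D.natDegree ≤ dx * (q.natDegree + r.natDegree) ∧
      (C D : K[X][X]) = A * q + B * r := by
  set n := q.natDegree with hn'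
  set m := r.natDegree with hm'
  set N := m + n with hN'
  have hN : 0 < N := by omega
  -- the vector of shifted polynomials
  set u : Fin N → K[X][X] := fun i =>
    if (i : ℕ) < m then q * X ^ (m - 1 - (i : ℕ)) else r * X ^ (n - 1 - ((i : ℕ) - m)) with hu
  have hu_deg : ∀ i, (u i).natDegree < N := by
    intro i
    have hi := i.isLt
    rw [hu]
    dsimp only
    split_ifs with h
    · refine lt_of_le_of_lt (natDegree_mul_le.trans ?_) (?_ : n + (m - 1 - (i:ℕ)) < N)
      · rw [natDegree_X_pow]
      · omega
    · refine lt_of_le_of_lt (natDegree_mul_le.trans ?_) (?_ : m + (n - 1 - ((i:ℕ) - m)) < N)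
      · rw [natDegree_X_pow]
      · omega
  -- the Sylvester-type matrix
  set M : Matrix (Fin N) (Fin N) K[X] := fun i j => (u i).coeff (N - 1 - (j : ℕ)) with hM
  have hrow : ∀ i, ∑ j : Fin N, (C (M i j) : K[X][X]) * X ^ (N - 1 - (j : ℕ)) = u i :=
    fun i => rowsum (hu_deg i)
  -- entries have degree at most dx
  have hMdeg : ∀ i j, (M i j).natDegree ≤ dx := by
    intro i j
    rw [hM, hu]
    dsimp only
    split_ifs with h <;> rw [coeff_mul_X_pow'] <;> split_ifs
    · exact hqx _
    · simp
    · exact hrx _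
    · simp
  -- the determinant
  set D := M.det with hD
  have hDdeg : D.natDegree ≤ dx * N := by
    rw [hD, Matrix.det_apply]
    refine natDegree_sum_le_of_forall_le _ _ fun σ _ => ?_
    have hs : Equiv.Perm.sign σ • ∏ i, M (σ i) i
        = ((Equiv.Perm.sign σ : ℤ) : K[X]) * ∏ i, M (σ i) i := by
      rw [Units.smul_def, zsmul_eq_mul]
    rw [hs]
    refine natDegree_mul_le.trans ?_
    rw [natDegree_intCast, zero_add]
    refine (natDegree_prod_le _ _).trans ?_
    calc ∑ i : Fin N, (M (σ i) i).natDegree ≤ ∑ _i : Fin N, dx :=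
          Finset.sum_le_sum fun i _ => hMdeg _ _
      _ = dx * N := by simp [Finset.sum_const, Finset.card_univ, Nat.mul_comm]
  -- the determinant is nonzero, by coprimality
  have hψinj : Function.Injective ⇑(algebraMap K[X] (RatFunc K)) :=
    RatFunc.algebraMap_injective K
  set ψ := algebraMap K[X] (RatFunc K) with hψ
  have hrmapdeg : (r.map ψ).natDegree = m := natDegree_map_eq_of_injective hψinj r
  have hrmap0 : r.map ψ ≠ 0 := fun h =>
    hr (Polynomial.map_injective ψ hψinj (by rw [h, Polynomial.map_zero]))
  have hD0 : D ≠ 0 := by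
    intro h0
    have hdet0 : (M.map ⇑ψ).det = 0 := by
      rw [← RingHom.mapMatrix_apply, ← RingHom.map_det, ← hD, h0, map_zero]
    obtain ⟨c, hc0, hcM⟩ := Matrix.exists_vecMul_eq_zero_iff.mpr hdet0
    set Ah : (RatFunc K)[X] :=
      ∑ i : Fin N, if (i : ℕ) < m then C (c i) * X ^ (m - 1 - (i : ℕ)) else 0 with hAh
    set Bh : (RatFunc K)[X] :=
      ∑ i : Fin N, if (i : ℕ) < m then 0 else C (c i) * X ^ (n - 1 - ((i : ℕ) - m)) with hBh
    have hrow' : ∀ i, (u i).map ψ = ∑ j : Fin N, C (ψ (M i j)) * X ^ (N - 1 - (j : ℕ)) := by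
      intro i
      rw [← hrow i, Polynomial.map_sum]
      simp only [Polynomial.map_mul, Polynomial.map_pow, Polynomial.map_C, Polynomial.map_X]
    have hsum : Ah * (q.map ψ) + Bh * (r.map ψ) = 0 := by
      calc Ah * (q.map ψ) + Bh * (r.map ψ) = ∑ i : Fin N, C (c i) * (u i).map ψ := by
            rw [hAh, hBh, Finset.sum_mul, Finset.sum_mul, ← Finset.sum_add_distrib]
            refine Finset.sum_congr rfl fun i _ => ?_
            rw [hu]
            dsimp only
            split_ifs with h <;>
              rw [Polynomial.map_mul, Polynomial.map_pow, Polynomial.map_X] <;> ring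
        _ = ∑ i : Fin N, ∑ j : Fin N, C (c i) * (C (ψ (M i j)) * X ^ (N - 1 - (j : ℕ))) := by
            refine Finset.sum_congr rfl fun i _ => ?_
            rw [hrow' i, Finset.mul_sum]
        _ = ∑ j : Fin N, C (Matrix.vecMul c (M.map ⇑ψ) j) * X ^ (N - 1 - (j : ℕ)) := by
            rw [Finset.sum_comm]
            refine Finset.sum_congr rfl fun j _ => ?_
            simp only [Matrix.vecMul, dotProduct, Matrix.map_apply, map_sum,
              Finset.sum_mul, map_mul]
            exact Finset.sum_congr rfl fun i _ => by ring
        _ = 0 := by rw [hcM]; simp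
    have hA0 : Ah = 0 := by
      by_contra hA
      rcases Nat.eq_zero_or_pos m with hm0 | hm1
      · refine hA (hAh ▸ Finset.sum_eq_zero fun i _ => if_neg (by omega))
      · have hdvd : (r.map ψ) ∣ Ah := by
          obtain ⟨a, b, hab⟩ := hcop
          exact ⟨Ah * b - a * Bh, by linear_combination (-Ah) * hab + a * hsum⟩
        have h1 : m ≤ Ah.natDegree := hrmapdeg ▸ natDegree_le_of_dvd hdvd hA
        have h2 : Ah.natDegree ≤ m - 1 := by
          rw [hAh]
          refine natDegree_sum_le_of_forall_le _ _ fun i _ => ?_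
          split_ifs with h
          · exact (natDegree_C_mul_le _ _).trans (by rw [natDegree_X_pow]; omega)
          · simp
        omega
    have hB0 : Bh = 0 := by
      have h := hsum
      rw [hA0, zero_mul, zero_add] at h
      exact (mul_eq_zero.mp h).resolve_right hrmap0
    apply hc0
    funext i
    by_cases hi : (i : ℕ) < m
    · have hcoeff : Ah.coeff (m - 1 - (i : ℕ)) = c i := by
        rw [hAh, finset_sum_coeff, Finset.sum_eq_single i]
        · rw [if_pos hi, coeff_C_mul, coeff_X_pow, if_pos rfl, mul_one]
        · intro b _ hb
          have hbv : (b : ℕ) ≠ (i : ℕ) := fun h => hb (Fin.ext h)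
          split_ifs with h
          · rw [coeff_C_mul, coeff_X_pow, if_neg (by omega), mul_zero]
          · exact coeff_zero _
        · exact fun h => absurd (Finset.mem_univ i) h
      rw [hA0, coeff_zero] at hcoeff
      exact hcoeff.symm
    · have hcoeff : Bh.coeff (n - 1 - ((i : ℕ) - m)) = c i := by
        rw [hBh, finset_sum_coeff, Finset.sum_eq_single i]
        · rw [if_neg hi, coeff_C_mul, coeff_X_pow, if_pos rfl, mul_one]
        · intro b _ hb
          have hbv : (b : ℕ) ≠ (i : ℕ) := fun h => hb (Fin.ext h)
          have hbN := b.isLt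
          have hiN := i.isLt
          split_ifs with h
          · exact coeff_zero _
          · rw [coeff_C_mul, coeff_X_pow, if_neg (by omega), mul_zero]
        · exact fun h => absurd (Finset.mem_univ i) h
      rw [hB0, coeff_zero] at hcoeff
      exact hcoeff.symm
  -- Bezout-type identity via the adjugate
  set e : Fin N → K[X][X] := fun j => X ^ (N - 1 - (j : ℕ)) with he
  have h1 : (M.map ⇑(C : K[X] →+* K[X][X])).mulVec e = u := by
    funext i
    simp only [Matrix.mulVec, dotProduct, Matrix.map_apply, he]
    exact hrow i
  have h2 : (M.map ⇑(C : K[X] →+* K[X][X])).adjugate.mulVec u = (C D : K[X][X]) • e := by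
    rw [← h1, Matrix.mulVec_mulVec, Matrix.adjugate_mul, hD, RingHom.map_det,
      RingHom.mapMatrix_apply, Matrix.smul_mulVec, Matrix.one_mulVec]
  set jl : Fin N := ⟨N - 1, by omega⟩ with hjl
  have h3 : ∑ i : Fin N, (M.map ⇑(C : K[X] →+* K[X][X])).adjugate jl i * u i
      = (C D : K[X][X]) := by
    have h4 := congrFun h2 jl
    simp only [Matrix.mulVec, dotProduct, Pi.smul_apply, he, smul_eq_mul] at h4
    rw [h4, Nat.sub_self, pow_zero, mul_one]
  refine ⟨D, ∑ i : Fin N, if (i : ℕ) < m then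
      (M.map ⇑(C : K[X] →+* K[X][X])).adjugate jl i * X ^ (m - 1 - (i : ℕ)) else 0,
    ∑ i : Fin N, if (i : ℕ) < m then 0 else
      (M.map ⇑(C : K[X] →+* K[X][X])).adjugate jl i * X ^ (n - 1 - ((i : ℕ) - m)),
    hD0, hDdeg.trans_eq (by rw [hN', Nat.add_comm]), ?_⟩
  rw [Finset.sum_mul, Finset.sum_mul, ← Finset.sum_add_distrib, ← h3]
  refine Finset.sum_congr rfl fun i _ => ?_
  rw [hu]
  dsimp only
  split_ifs with h <;> ring

end Sylvester

section Main

theorem order_derivative_eval_le' (K : Type*) [Field K] (dx dy : ℕ)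
    (P : Polynomial (Polynomial K)) (hP : P ≠ 0)
    (hPx : ∀ j, (P.coeff j).natDegree ≤ dx) (hPy : P.natDegree ≤ dy)
    (y0 : PowerSeries K)
    (hroot : Polynomial.eval₂ Polynomial.coeToPowerSeries.ringHom y0 P = 0)
    (hder : Polynomial.eval₂ Polynomial.coeToPowerSeries.ringHom y0
      (Polynomial.derivative P) ≠ 0) :
    (Polynomial.eval₂ Polynomial.coeToPowerSeries.ringHom y0
        (Polynomial.derivative P)).order ≤ ((dx * (2 * dy - 1) : ℕ) : ℕ∞) := by
  classical
  set ι : PowerSeries K →+* LaurentSeries K := HahnSeries.ofPowerSeries ℤ K with hι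
  have hιinj : Function.Injective ⇑ι := HahnSeries.ofPowerSeries_injective
  set ev₀ : K[X][X] →+* LaurentSeries K :=
    eval₂RingHom (ι.comp coeToPowerSeries.ringHom) (ι y0) with hev₀
  have hcompat : ∀ p : K[X][X],
      ι (eval₂ coeToPowerSeries.ringHom y0 p) = ev₀ p := by
    intro p
    rw [hev₀, coe_eval₂RingHom]
    exact hom_eval₂ p coeToPowerSeries.ringHom ι y0
  set ψ := algebraMap (Polynomial K) (RatFunc K) with hψ
  set φ : RatFunc K →+* LaurentSeries K :=
    (open scoped RatFunc in algebraMap (RatFunc K) (LaurentSeries K)) with hφ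
  have hφψ : φ.comp ψ = ι.comp coeToPowerSeries.ringHom := by
    apply Polynomial.ringHom_ext
    · intro a
      rw [RingHom.comp_apply, RingHom.comp_apply, hψ, RatFunc.algebraMap_C,
        show φ (RatFunc.C a) = ((RatFunc.C a : RatFunc K) : LaurentSeries K) from rfl,
        ← RatFunc.algebraMap_C]
      exact (RatFunc.coe_coe (C a)).symm
    · rw [RingHom.comp_apply, RingHom.comp_apply, hψ, RatFunc.algebraMap_X,
        show φ RatFunc.X = ((RatFunc.X : RatFunc K) : LaurentSeries K) from rfl,
        RatFunc.coe_X, coeToPowerSeries.ringHom_apply, coe_X, hι, HahnSeries.ofPowerSeries_X]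
  have hder' : derivative P ≠ 0 := fun h => hder (by rw [h, eval₂_zero])
  have hdegP : 1 ≤ P.natDegree := by
    by_contra h
    push_neg at h
    have h0 : P.natDegree = 0 := by omega
    exact hder' (by rw [eq_C_of_natDegree_eq_zero h0, derivative_C])
  have hdy : 1 ≤ dy := hdegP.trans hPy
  have hev₀P : ev₀ P = 0 := by rw [← hcompat, hroot, map_zero]
  obtain ⟨μ, hμmem, hμ0ev⟩ : ∃ μ ∈ UniqueFactorizationMonoid.factors P, ev₀ μ = 0 := by
    obtain ⟨w, hw⟩ := UniqueFactorizationMonoid.factors_prod hP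
    have h1 : ev₀ (UniqueFactorizationMonoid.factors P).prod * ev₀ (w : K[X][X]) = 0 := by
      rw [← map_mul, hw, hev₀P]
    have hw0 : ev₀ (w : K[X][X]) ≠ 0 := (w.isUnit.map ev₀).ne_zero
    have h2 : ev₀ (UniqueFactorizationMonoid.factors P).prod = 0 :=
      (mul_eq_zero.mp h1).resolve_right hw0
    rw [map_multiset_prod] at h2
    obtain ⟨μ, hμ, hμx⟩ := Multiset.mem_map.mp (Multiset.prod_eq_zero_iff.mp h2)
    exact ⟨μ, hμ, hμx⟩
  have hμirr : Irreducible μ := UniqueFactorizationMonoid.irreducible_of_factor _ hμmem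
  have hμdvd : μ ∣ P := UniqueFactorizationMonoid.dvd_of_mem_factors hμmem
  have hμne : μ ≠ 0 := hμirr.ne_zero
  have hμdeg : 0 < μ.natDegree := by
    rcases Nat.eq_zero_or_pos μ.natDegree with h0 | h
    · exfalso
      have hC := eq_C_of_natDegree_eq_zero h0
      have hc0 : μ.coeff 0 ≠ 0 := fun hc => hμne (by rw [hC, hc, map_zero])
      have h1 : ev₀ μ = (ι.comp coeToPowerSeries.ringHom) (μ.coeff 0) := by
        conv_lhs => rw [hC]
        rw [hev₀, coe_eval₂RingHom, eval₂_C]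
      have h2 : (ι.comp coeToPowerSeries.ringHom) (μ.coeff 0) ≠ 0 := by
        intro h
        apply hc0
        have : ((μ.coeff 0 : K[X]) : PowerSeries K) = 0 := by
          apply hιinj
          rw [map_zero]
          rw [RingHom.comp_apply, coeToPowerSeries.ringHom_apply] at h
          exact h
        exact_mod_cast (Polynomial.coe_inj (ψ := 0)).mp (by simpa using this)
      exact h2 (h1 ▸ hμ0ev)
    · exact h
  have hμx : ∀ j, (μ.coeff j).natDegree ≤ dx := coeff_natDegree_le_of_dvd hμdvd hP hPx
  have hQx : ∀ j, ((derivative P).coeff j).natDegree ≤ dx := by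
    intro j
    rw [coeff_derivative]
    refine natDegree_mul_le.trans ?_
    have hcast : ((j : K[X]) + 1) = ((j + 1 : ℕ) : K[X]) := by push_cast; ring
    rw [hcast, natDegree_natCast]
    simpa using hPx (j + 1)
  have hprim : μ.IsPrimitive := by
    rw [isPrimitive_iff_isUnit_of_C_dvd]
    intro g hg
    obtain ⟨w, hw⟩ := hg
    rcases hμirr.isUnit_or_isUnit hw with h | h
    · exact isUnit_C.mp h
    · exfalso
      have h1 : μ.natDegree ≤ 0 := by
        rw [hw]
        refine natDegree_mul_le.trans ?_
        rw [natDegree_C, natDegree_eq_zero_of_isUnit h]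
      omega
  have hμmapirr : Irreducible (μ.map ψ) :=
    (hprim.irreducible_iff_irreducible_map_fraction_map).mp hμirr
  have hevalmap : ∀ p : K[X][X], eval₂ φ (ι y0) (p.map ψ) = ev₀ p := by
    intro p
    rw [eval₂_map, hφψ, hev₀, coe_eval₂RingHom]
  have hder₀ : ev₀ (derivative P) ≠ 0 := by
    rw [← hcompat]
    exact fun h => hder (hιinj (by rwa [map_zero]))
  have hnotdvd : ¬ (μ.map ψ ∣ (derivative P).map ψ) := by
    rintro ⟨w, hw⟩
    apply hder₀
    rw [← hevalmap, hw, eval₂_mul, hevalmap μ, hμ0ev, zero_mul]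
  have hcop : IsCoprime (μ.map ψ) ((derivative P).map ψ) :=
    (hμmapirr.coprime_iff_not_dvd).mpr hnotdvd
  obtain ⟨D, A, B, hD0, hDdeg, hCD⟩ :=
    sylvester_exists μ (derivative P) hμne hder' hμdeg dx hμx hQx hcop
  have hevμ : eval₂ coeToPowerSeries.ringHom y0 μ = 0 :=
    hιinj (by rw [hcompat, hμ0ev, map_zero])
  have hkey : coeToPowerSeries.ringHom D = eval₂ coeToPowerSeries.ringHom y0 B *
      eval₂ coeToPowerSeries.ringHom y0 (derivative P) := by
    have h := congrArg (eval₂ coeToPowerSeries.ringHom y0) hCD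
    rw [eval₂_C, eval₂_add, eval₂_mul, eval₂_mul, hevμ, mul_zero, zero_add] at h
    exact h
  have hord1 : (eval₂ coeToPowerSeries.ringHom y0 (derivative P)).order ≤
      (coeToPowerSeries.ringHom D).order := by
    rw [hkey, PowerSeries.order_mul]
    exact le_add_self
  have hord2 : (coeToPowerSeries.ringHom D).order ≤ (D.natDegree : ℕ∞) := by
    refine PowerSeries.order_le _ ?_
    rw [coeToPowerSeries.ringHom_apply, Polynomial.coeff_coe]
    exact leadingCoeff_ne_zero.mpr hD0
  refine (hord1.trans hord2).trans (Nat.cast_le.mpr ?_)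
  refine hDdeg.trans (Nat.mul_le_mul_left dx ?_)
  have h1 : μ.natDegree ≤ dy := (natDegree_le_of_dvd hμdvd hP).trans hPy
  have h2 : (derivative P).natDegree ≤ dy - 1 :=
    (natDegree_derivative_le P).trans (by omega)
  omega

end Main

/-- Let `K` be a field of characteristic zero, `P ∈ K[x][y]` nonzero with `deg_x P ≤ d_x`
and `deg_y P ≤ d_y`, and `y₀ ∈ K[[x]]` a root of `P` with `∂P/∂y(x, y₀) ≠ 0`.  Then
`ord_x(∂P/∂y(x, y₀)) ≤ 2·d_x·d_y`.  Moreover if `P` has only simple roots (i.e. `P` and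
`∂P/∂y` are coprime over the field of rational functions `K(x)`; equivalently the
discriminant of `P` is nonzero), then `ord_x(∂P/∂y(x, y₀)) ≤ d_x·(2·d_y - 1)`. -/
theorem order_derivative_eval_le (K : Type*) [Field K] [CharZero K] (dx dy : ℕ)
    (P : Polynomial (Polynomial K)) (hP : P ≠ 0)
    (hPx : ∀ j, (P.coeff j).natDegree ≤ dx) (hPy : P.natDegree ≤ dy)
    (y0 : PowerSeries K)
    (hroot : Polynomial.eval₂ Polynomial.coeToPowerSeries.ringHom y0 P = 0)
    (hder : Polynomial.eval₂ Polynomial.coeToPowerSeries.ringHom y0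
      (Polynomial.derivative P) ≠ 0) :
    (Polynomial.eval₂ Polynomial.coeToPowerSeries.ringHom y0
        (Polynomial.derivative P)).order ≤ ((2 * dx * dy : ℕ) : ℕ∞) ∧
      (IsCoprime (P.map (algebraMap (Polynomial K) (RatFunc K)))
          ((Polynomial.derivative P).map (algebraMap (Polynomial K) (RatFunc K))) →
        (Polynomial.eval₂ Polynomial.coeToPowerSeries.ringHom y0
            (Polynomial.derivative P)).order ≤ ((dx * (2 * dy - 1) : ℕ) : ℕ∞)) := by
  have hmain := order_derivative_eval_le' K dx dy P hP hPx hPy y0 hroot hder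
  have hle : dx * (2 * dy - 1) ≤ 2 * dx * dy := by
    calc dx * (2 * dy - 1) ≤ dx * (2 * dy) := Nat.mul_le_mul_left dx (Nat.sub_le _ _)
      _ = 2 * dx * dy := by ring
  exact ⟨hmain.trans (Nat.cast_le.mpr hle), fun _ => hmain⟩
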